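/- For a Guess&Check program P with guess part G_P (choice rules only) and check part C_P (a stratified program possibly with constraints whose head atoms are disjoint from the atoms of G_P), M is an answer set of P if and only if there exists an answer set M' of G_P and an answer set W of C_P ∪ fix_{G_P}(M') with M = M' ∪ W. -/

import Mathlib

inductive Lit (α : Type) where
  | pos (a : α) : Lit α
  | neg (a : α) : Lit α

def Lit.compl {α : Type} : Lit α → Lit α
  | .pos a => .neg a
  | .neg a => .pos a

/-- A rule with an optional atom head (`none` for constraints) and a body of literals. -/
structure Rule (α : Type) where
  head : Option α
  body : Set (Lit α)

def posBody {α : Type} (r : Rule α) : Set α := {a | Lit.pos a ∈ r.body}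
def negBody {α : Type} (r : Rule α) : Set α := {a | Lit.neg a ∈ r.body}

/-- The atoms (Herbrand base) of a program. -/
def atoms {α : Type} (P : Set (Rule α)) : Set α :=
  {a | ∃ r ∈ P, r.head = some a ∨ Lit.pos a ∈ r.body ∨ Lit.neg a ∈ r.body}

/-- `M'` is a model of the Gelfond–Lifschitz reduct `P^M`. -/
def modelsReduct {α : Type} (P : Set (Rule α)) (M M' : Set α) : Prop :=
  ∀ r ∈ P, (∀ a ∈ negBody r, a ∉ M) → posBody r ⊆ M' →
    ∃ h, r.head = some h ∧ h ∈ M'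

/-- `M` is an answer set of `P`: a subset of the atoms of `P` that is a
minimal model of the reduct `P^M`. -/
def isAnswerSet {α : Type} (P : Set (Rule α)) (M : Set α) : Prop :=
  M ⊆ atoms P ∧ modelsReduct P M M ∧ ∀ M' ⊂ M, ¬ modelsReduct P M M'

/-- `G` is a choice program: it consists exactly of the pairs of rules
`a ← ∼na(a)` and `na(a) ← ∼a` for the atoms `a` of some set `A`,
with fresh auxiliary atoms `na(a)`. -/
def isChoiceProgram {α : Type} (G : Set (Rule α)) : Prop :=
  ∃ (A : Set α) (na : α → α),
    (∀ a ∈ A, na a ∉ A) ∧ Set.InjOn na A ∧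
    G = {r | ∃ a ∈ A, r = ⟨some a, {Lit.neg (na a)}⟩ ∨ r = ⟨some (na a), {Lit.neg a}⟩}

/-- `P` is stratified: there is a level mapping such that positive dependencies
do not increase the level and negative dependencies strictly decrease it. -/
def stratified {α : Type} (P : Set (Rule α)) : Prop :=
  ∃ s : α → ℕ, ∀ r ∈ P, ∀ h, r.head = some h →
    (∀ a ∈ posBody r, s a ≤ s h) ∧ (∀ a ∈ negBody r, s a < s h)

/-- The head atoms of a program. -/
def heads {α : Type} (P : Set (Rule α)) : Set α :=
  {h | ∃ r ∈ P, r.head = some h}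

/-- `fix_Q(M)`: facts for the atoms of `Q` true in `M` and constraints
forbidding the atoms of `Q` false in `M`. -/
def fixProg {α : Type} (Q : Set (Rule α)) (M : Set α) : Set (Rule α) :=
  {r | ∃ a ∈ M ∩ atoms Q, r = ⟨some a, ∅⟩} ∪
  {r | ∃ a ∈ atoms Q \ M, r = ⟨none, {Lit.pos a}⟩}

/-- Modularity of Guess&Check programs: for a Guess&Check program with guess
part `G` (choice rules only) and check part `C` (stratified, possibly with
constraints, whose head atoms do not occur among the atoms of `G`),
`M` is an answer set of `G ∪ C` iff `M = M' ∪ W` for some answer set `M'` of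
`G` and some answer set `W` of `C ∪ fix_G(M')`. -/
theorem guessCheck_modularity {α : Type} (G C : Set (Rule α))
    (hG : isChoiceProgram G) (hC : stratified C)
    (hdisj : heads C ∩ atoms G = ∅) (M : Set α) :
    isAnswerSet (G ∪ C) M ↔
      ∃ M' W : Set α, isAnswerSet G M' ∧ isAnswerSet (C ∪ fixProg G M') W ∧
        M = M' ∪ W := by
  obtain ⟨A, na, hfresh, hinj, hGdef⟩ := hG
  clear hC hinj
  -- membership characterization for G
  have hGmem : ∀ r : Rule α, r ∈ G ↔ ∃ a ∈ A,
      r = ⟨some a, {Lit.neg (na a)}⟩ ∨ r = ⟨some (na a), {Lit.neg a}⟩ := by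
    intro r; rw [hGdef]; exact Iff.rfl
  -- atoms of G
  have hU : ∀ x, x ∈ atoms G ↔ ∃ a ∈ A, x = a ∨ x = na a := by
    intro x
    constructor
    · rintro ⟨r, hr, hx⟩
      rw [hGmem] at hr
      obtain ⟨a, ha, rfl | rfl⟩ := hr
      · refine ⟨a, ha, ?_⟩
        rcases hx with h | h | h
        · injection h with h; exact Or.inl h.symm
        · rw [Set.mem_singleton_iff] at h; cases h
        · rw [Set.mem_singleton_iff] at h; injection h with h; exact Or.inr h
      · refine ⟨a, ha, ?_⟩
        rcases hx with h | h | h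
        · injection h with h; exact Or.inr h.symm
        · rw [Set.mem_singleton_iff] at h; cases h
        · rw [Set.mem_singleton_iff] at h; injection h with h; exact Or.inl h
    · rintro ⟨a, ha, h | h⟩
      · exact ⟨⟨some a, {Lit.neg (na a)}⟩, (hGmem _).mpr ⟨a, ha, Or.inl rfl⟩,
          Or.inl (by rw [h])⟩
      · exact ⟨⟨some (na a), {Lit.neg a}⟩, (hGmem _).mpr ⟨a, ha, Or.inr rfl⟩,
          Or.inl (by rw [h])⟩
  have haU : ∀ a ∈ A, a ∈ atoms G := fun a ha => (hU a).mpr ⟨a, ha, Or.inl rfl⟩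
  have hnaU : ∀ a ∈ A, na a ∈ atoms G := fun a ha => (hU (na a)).mpr ⟨a, ha, Or.inr rfl⟩
  have hdisj' : ∀ h ∈ heads C, h ∉ atoms G := by
    intro h hh hA
    exact absurd (Set.mem_inter hh hA) (by rw [hdisj]; exact Set.notMem_empty h)
  -- body computations
  have hneg1 : ∀ b : α, negBody (⟨some b, ({Lit.neg (na b)} : Set (Lit α))⟩ : Rule α) = {na b} := by
    intro b; ext x; simp [negBody]
  have hpos1 : ∀ b : α, posBody (⟨some b, ({Lit.neg (na b)} : Set (Lit α))⟩ : Rule α) = ∅ := by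
    intro b; ext x; simp [posBody]
  have hneg2 : ∀ b : α, negBody (⟨some (na b), ({Lit.neg b} : Set (Lit α))⟩ : Rule α) = {b} := by
    intro b; ext x; simp [negBody]
  have hpos2 : ∀ b : α, posBody (⟨some (na b), ({Lit.neg b} : Set (Lit α))⟩ : Rule α) = ∅ := by
    intro b; ext x; simp [posBody]
  have hnegF : ∀ b : α, negBody (⟨some b, (∅ : Set (Lit α))⟩ : Rule α) = ∅ := by
    intro b; ext x; simp [negBody]
  have hposF : ∀ b : α, posBody (⟨some b, (∅ : Set (Lit α))⟩ : Rule α) = ∅ := by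
    intro b; ext x; simp [posBody]
  have hnegK : ∀ b : α, negBody (⟨none, ({Lit.pos b} : Set (Lit α))⟩ : Rule α) = ∅ := by
    intro b; ext x; simp [negBody]
  have hposK : ∀ b : α, posBody (⟨none, ({Lit.pos b} : Set (Lit α))⟩ : Rule α) = {b} := by
    intro b; ext x; simp [posBody]
  -- membership in fixProg
  have hFmem : ∀ (M' : Set α) (r : Rule α), r ∈ fixProg G M' ↔
      (∃ a ∈ M' ∩ atoms G, r = ⟨some a, ∅⟩) ∨ (∃ a ∈ atoms G \ M', r = ⟨none, {Lit.pos a}⟩) := by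
    intro M' r; exact Iff.rfl
  -- atoms of fixProg
  have hatomsFix : ∀ M' : Set α, M' ⊆ atoms G → atoms (fixProg G M') = atoms G := by
    intro M' hsub
    ext x
    constructor
    · rintro ⟨r, hr, hx⟩
      rcases (hFmem M' r).mp hr with ⟨a, ha, rfl⟩ | ⟨a, ha, rfl⟩
      · rcases hx with h | h | h
        · injection h with h; exact h ▸ ha.2
        · exact absurd h (Set.notMem_empty _)
        · exact absurd h (Set.notMem_empty _)
      · rcases hx with h | h | h
        · cases h
        · rw [Set.mem_singleton_iff] at h; injection h with h; exact h ▸ ha.1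
        · rw [Set.mem_singleton_iff] at h; cases h
    · intro hx
      by_cases hxM : x ∈ M'
      · exact ⟨⟨some x, ∅⟩, (hFmem M' _).mpr (Or.inl ⟨x, ⟨hxM, hx⟩, rfl⟩), Or.inl rfl⟩
      · exact ⟨⟨none, {Lit.pos x}⟩, (hFmem M' _).mpr (Or.inr ⟨x, ⟨hx, hxM⟩, rfl⟩),
          Or.inr (Or.inl rfl)⟩
  have hatomsUnion : ∀ P Q : Set (Rule α), atoms (P ∪ Q) = atoms P ∪ atoms Q := by
    intro P Q
    ext x
    constructor
    · rintro ⟨r, hr | hr, hx⟩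
      · exact Or.inl ⟨r, hr, hx⟩
      · exact Or.inr ⟨r, hr, hx⟩
    · rintro (⟨r, hr, hx⟩ | ⟨r, hr, hx⟩)
      · exact ⟨r, Or.inl hr, hx⟩
      · exact ⟨r, Or.inr hr, hx⟩
  -- characterization of answer sets of G
  have charG : ∀ N : Set α, isAnswerSet G N ↔
      (N ⊆ atoms G ∧ ∀ a ∈ A, (a ∈ N ↔ na a ∉ N)) := by
    intro N
    constructor
    · rintro ⟨hsub, hmod, hmin⟩
      refine ⟨hsub, fun a ha => ⟨?_, ?_⟩⟩
      · -- a ∈ N → na a ∉ N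
        intro haN hnaN
        -- N \ {a} models the reduct, contradicting minimality
        refine hmin (N \ {a}) ⟨Set.diff_subset, fun hEq => ?_⟩ ?_
        · exact ((hEq haN).2 rfl)
        · intro r hr hnegr hposr
          rcases (hGmem r).mp hr with ⟨b, hb, rfl | rfl⟩
          · refine ⟨b, rfl, ?_, ?_⟩
            · obtain ⟨h, hh, hhN⟩ := hmod _ hr hnegr (hposr.trans Set.diff_subset)
              cases hh; exact hhN
            · intro hba
              apply hnegr (na b) (by rw [hneg1]; rfl)
              rw [Set.mem_singleton_iff] at hba
              rw [hba]; exact hnaN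
          · refine ⟨na b, rfl, ?_, ?_⟩
            · obtain ⟨h, hh, hhN⟩ := hmod _ hr hnegr (hposr.trans Set.diff_subset)
              cases hh; exact hhN
            · intro hba
              rw [Set.mem_singleton_iff] at hba
              exact hfresh b hb (hba ▸ ha)
      · -- na a ∉ N → a ∈ N
        intro hnaN
        obtain ⟨h, hh, hhN⟩ := hmod ⟨some a, {Lit.neg (na a)}⟩
          ((hGmem _).mpr ⟨a, ha, Or.inl rfl⟩)
          (by rw [hneg1]; intro x hx; rw [Set.mem_singleton_iff] at hx; rw [hx]; exact hnaN)
          (by rw [hpos1]; exact Set.empty_subset N)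
        cases hh; exact hhN
    · rintro ⟨hsub, hch⟩
      refine ⟨hsub, ?_, ?_⟩
      · intro r hr hnegr hposr
        rcases (hGmem r).mp hr with ⟨b, hb, rfl | rfl⟩
        · refine ⟨b, rfl, (hch b hb).mpr ?_⟩
          exact hnegr (na b) (by rw [hneg1]; rfl)
        · refine ⟨na b, rfl, ?_⟩
          by_contra hnbN
          exact hnegr b (by rw [hneg2]; rfl) ((hch b hb).mpr hnbN)
      · rintro X ⟨hXsub, hXne⟩ hXmod
        apply hXne
        intro x hxN
        obtain ⟨b, hb, hxb | hxb⟩ := (hU x).mp (hsub hxN)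
        · subst hxb
          have hnb : na x ∉ N := (hch x hb).mp hxN
          obtain ⟨h, hh, hhX⟩ := hXmod ⟨some x, {Lit.neg (na x)}⟩
            ((hGmem _).mpr ⟨x, hb, Or.inl rfl⟩)
            (by rw [hneg1]; intro y hy; rw [Set.mem_singleton_iff] at hy; rw [hy]; exact hnb)
            (by rw [hpos1]; exact Set.empty_subset X)
          cases hh; exact hhX
        · subst hxb
          have hbN : b ∉ N := fun hbN => (hch b hb).mp hbN hxN
          obtain ⟨h, hh, hhX⟩ := hXmod ⟨some (na b), {Lit.neg b}⟩
            ((hGmem _).mpr ⟨b, hb, Or.inr rfl⟩)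
            (by rw [hneg2]; intro y hy; rw [Set.mem_singleton_iff] at hy; rw [hy]; exact hbN)
            (by rw [hpos2]; exact Set.empty_subset X)
          cases hh; exact hhX
  -- equivalence of reduct models for subsets of N
  have modelsEquiv : ∀ (N M' X : Set α), N ∩ atoms G = M' →
      (∀ a ∈ A, (a ∈ M' ↔ na a ∉ M')) → X ⊆ N →
      (modelsReduct (G ∪ C) N X ↔ modelsReduct (C ∪ fixProg G M') N X) := by
    intro N M' X hNU hch hXN
    have hmemM' : ∀ x, x ∈ M' ↔ x ∈ N ∧ x ∈ atoms G := by
      intro x; rw [← hNU]; exact Iff.rfl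
    constructor
    · intro h r hr hnegr hposr
      rcases hr with hr | hr
      · exact h r (Or.inr hr) hnegr hposr
      · rcases (hFmem M' r).mp hr with ⟨a, ⟨haM, haU'⟩, rfl⟩ | ⟨a, ⟨haU', haM⟩, rfl⟩
        · -- fact a ← , with a ∈ M'
          refine ⟨a, rfl, ?_⟩
          obtain ⟨b, hb, hab | hab⟩ := (hU a).mp haU'
          · subst hab
            have hnb : na a ∉ N := by
              intro hnbN
              exact (hch a hb).mp haM ((hmemM' (na a)).mpr ⟨hnbN, hnaU a hb⟩)
            obtain ⟨h', hh', hhX⟩ := h ⟨some a, {Lit.neg (na a)}⟩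
              (Or.inl ((hGmem _).mpr ⟨a, hb, Or.inl rfl⟩))
              (by rw [hneg1]; intro y hy; rw [Set.mem_singleton_iff] at hy; rw [hy]; exact hnb)
              (by rw [hpos1]; exact Set.empty_subset X)
            cases hh'; exact hhX
          · subst hab
            have hbN : b ∉ N := by
              intro hbN
              exact (hch b hb).mp ((hmemM' b).mpr ⟨hbN, haU b hb⟩) haM
            obtain ⟨h', hh', hhX⟩ := h ⟨some (na b), {Lit.neg b}⟩
              (Or.inl ((hGmem _).mpr ⟨b, hb, Or.inr rfl⟩))
              (by rw [hneg2]; intro y hy; rw [Set.mem_singleton_iff] at hy; rw [hy]; exact hbN)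
              (by rw [hpos2]; exact Set.empty_subset X)
            cases hh'; exact hhX
        · -- constraint ← a with a ∈ atoms G \ M' : body cannot be satisfied
          exfalso
          have haX : a ∈ X := hposr (by rw [hposK]; rfl)
          exact haM ((hmemM' a).mpr ⟨hXN haX, haU'⟩)
    · intro h r hr hnegr hposr
      rcases hr with hr | hr
      · rcases (hGmem r).mp hr with ⟨b, hb, rfl | rfl⟩
        · -- b ← not (na b), with na b ∉ N
          have hnb : na b ∉ N := hnegr (na b) (by rw [hneg1]; rfl)
          have hbM : b ∈ M' := (hch b hb).mpr (fun hc => hnb ((hmemM' (na b)).mp hc).1)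
          obtain ⟨h', hh', hhX⟩ := h ⟨some b, ∅⟩
            (Or.inr ((hFmem M' _).mpr (Or.inl ⟨b, ⟨hbM, haU b hb⟩, rfl⟩)))
            (by rw [hnegF]; intro y hy; exact absurd hy (Set.notMem_empty y))
            (by rw [hposF]; exact Set.empty_subset X)
          cases hh'; exact ⟨b, rfl, hhX⟩
        · have hbN : b ∉ N := hnegr b (by rw [hneg2]; rfl)
          have hbM : b ∉ M' := fun hc => hbN ((hmemM' b).mp hc).1
          have hnbM : na b ∈ M' := by
            by_contra hc
            exact hbM ((hch b hb).mpr (fun hd => hc hd))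
          obtain ⟨h', hh', hhX⟩ := h ⟨some (na b), ∅⟩
            (Or.inr ((hFmem M' _).mpr (Or.inl ⟨na b, ⟨hnbM, hnaU b hb⟩, rfl⟩)))
            (by rw [hnegF]; intro y hy; exact absurd hy (Set.notMem_empty y))
            (by rw [hposF]; exact Set.empty_subset X)
          cases hh'; exact ⟨na b, rfl, hhX⟩
      · exact h r (Or.inl hr) hnegr hposr
  -- equivalence of answer sets
  have asEquiv : ∀ (N M' : Set α), N ∩ atoms G = M' →
      (∀ a ∈ A, (a ∈ M' ↔ na a ∉ M')) →
      (isAnswerSet (G ∪ C) N ↔ isAnswerSet (C ∪ fixProg G M') N) := by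
    intro N M' hNU hch
    have hM'U : M' ⊆ atoms G := by rw [← hNU]; exact Set.inter_subset_right
    have hA : atoms (C ∪ fixProg G M') = atoms (G ∪ C) := by
      rw [hatomsUnion, hatomsUnion, hatomsFix M' hM'U, Set.union_comm]
    constructor
    · rintro ⟨h1, h2, h3⟩
      refine ⟨by rw [hA]; exact h1,
        (modelsEquiv N M' N hNU hch (le_refl N)).mp h2, ?_⟩
      intro X hX hXmod
      exact h3 X hX ((modelsEquiv N M' X hNU hch (subset_of_ssubset hX)).mpr hXmod)
    · rintro ⟨h1, h2, h3⟩
      refine ⟨by rw [← hA]; exact h1,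
        (modelsEquiv N M' N hNU hch (le_refl N)).mpr h2, ?_⟩
      intro X hX hXmod
      exact h3 X hX ((modelsEquiv N M' X hNU hch (subset_of_ssubset hX)).mp hXmod)
  -- main proof
  constructor
  · intro hM
    obtain ⟨hsub, hmod, hmin⟩ := hM
    -- exactly one of a, na a in M
    have hch : ∀ a ∈ A, (a ∈ M ↔ na a ∉ M) := by
      intro a ha
      constructor
      · intro haM hnaM
        refine hmin (M \ {a}) ⟨Set.diff_subset, fun hEq => ((hEq haM).2 rfl)⟩ ?_
        intro r hr hnegr hposr
        rcases hr with hr | hr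
        · rcases (hGmem r).mp hr with ⟨b, hb, rfl | rfl⟩
          · refine ⟨b, rfl, ?_, ?_⟩
            · obtain ⟨h, hh, hhM⟩ := hmod _ (Or.inl hr) hnegr (hposr.trans Set.diff_subset)
              cases hh; exact hhM
            · intro hba
              rw [Set.mem_singleton_iff] at hba
              exact hnegr (na b) (by rw [hneg1]; rfl) (hba ▸ hnaM)
          · refine ⟨na b, rfl, ?_, ?_⟩
            · obtain ⟨h, hh, hhM⟩ := hmod _ (Or.inl hr) hnegr (hposr.trans Set.diff_subset)
              cases hh; exact hhM
            · intro hba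
              rw [Set.mem_singleton_iff] at hba
              exact hfresh b hb (hba ▸ ha)
        · obtain ⟨h, hh, hhM⟩ := hmod r (Or.inr hr) hnegr (hposr.trans Set.diff_subset)
          refine ⟨h, hh, hhM, ?_⟩
          intro hha
          rw [Set.mem_singleton_iff] at hha
          exact hdisj' h ⟨r, hr, hh⟩ (hha ▸ haU a ha)
      · intro hnaM
        obtain ⟨h, hh, hhM⟩ := hmod ⟨some a, {Lit.neg (na a)}⟩
          (Or.inl ((hGmem _).mpr ⟨a, ha, Or.inl rfl⟩))
          (by rw [hneg1]; intro y hy; rw [Set.mem_singleton_iff] at hy; rw [hy]; exact hnaM)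
          (by rw [hpos1]; exact Set.empty_subset M)
        cases hh; exact hhM
    set M' := M ∩ atoms G with hM'
    have hchM' : ∀ a ∈ A, (a ∈ M' ↔ na a ∉ M') := by
      intro a ha
      constructor
      · intro hx hy
        exact (hch a ha).mp hx.1 hy.1
      · intro hy
        have hna : na a ∉ M := fun hc => hy ⟨hc, hnaU a ha⟩
        exact ⟨(hch a ha).mpr hna, haU a ha⟩
    refine ⟨M', M, (charG M').mpr ⟨Set.inter_subset_right, hchM'⟩,
      (asEquiv M M' rfl hchM').mp ⟨hsub, hmod, hmin⟩,
      (Set.union_eq_self_of_subset_left Set.inter_subset_left).symm⟩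
  · rintro ⟨M', W, hM', hW, rfl⟩
    obtain ⟨hM'sub, hchM'⟩ := (charG M').mp hM'
    obtain ⟨hWsub, hWmod, hWmin⟩ := hW
    -- M' ⊆ W via facts
    have hM'W : M' ⊆ W := by
      intro a haM
      obtain ⟨h, hh, hhW⟩ := hWmod ⟨some a, ∅⟩
        (Or.inr ((hFmem M' _).mpr (Or.inl ⟨a, ⟨haM, hM'sub haM⟩, rfl⟩)))
        (by rw [hnegF]; intro y hy; exact absurd hy (Set.notMem_empty y))
        (by rw [hposF]; exact Set.empty_subset W)
      cases hh; exact hhW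
    -- W ∩ atoms G = M' via constraints
    have hWU : W ∩ atoms G = M' := by
      apply Set.Subset.antisymm
      · rintro x ⟨hxW, hxU⟩
        by_contra hxM
        obtain ⟨h, hh, _⟩ := hWmod ⟨none, {Lit.pos x}⟩
          (Or.inr ((hFmem M' _).mpr (Or.inr ⟨x, ⟨hxU, hxM⟩, rfl⟩)))
          (by rw [hnegK]; intro y hy; exact absurd hy (Set.notMem_empty y))
          (by rw [hposK]; intro y hy; rw [Set.mem_singleton_iff] at hy; rw [hy]; exact hxW)
        cases hh
      · intro x hx
        exact ⟨hM'W hx, hM'sub hx⟩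
    have hMW : M' ∪ W = W := Set.union_eq_self_of_subset_left hM'W
    rw [hMW]
    exact (asEquiv W M' hWU hchM').mpr ⟨hWsub, hWmod, hWmin⟩
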